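/- arXiv:1307.2004 — 3 statements merged into one kernel-verified Lean document; each statement's English description precedes it below -/
import Mathlib

section
/- If A, B, C are bounded negative games and σ : A ⊸ B, τ : B ⊸ C are total strategies, then the composite τ ∘ σ (defined by parallel composition plus hiding) is a total strategy on A ⊸ C. -/
namespace WS

/-- The finite prefix of length `n` of an infinite sequence. -/
def pref {α : Type} (f : ℕ → α) (n : ℕ) : List α := List.ofFn fun i : Fin n => f i

/-- A game: moves, a labelling of moves (`true` = Player move), a starting player
(`true` = Player starts, `false` = Opponent starts), a set of valid finite plays,
and a set of P-winning infinite plays. -/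
structure Game where
  Move : Type
  lab : Move → Bool
  start : Bool
  plays : List Move → Prop
  win : (ℕ → Move) → Prop

/-- A sequence alternates, starting with a move of player `b`. -/
def altWith {M : Type} (lab : M → Bool) (b : Bool) (s : List M) : Prop :=
  ∀ (i : ℕ) (h : i < s.length), lab (s.get ⟨i, h⟩) = (b != decide (i % 2 = 1))

namespace Game

def alt (G : Game) : List G.Move → Prop := altWith G.lab G.start

/-- An infinite play: every finite prefix is a valid play. -/
def InfPlay (G : Game) (f : ℕ → G.Move) : Prop := ∀ n, G.plays (pref f n)

/-- The well-formedness conditions on a game: plays form a nonempty prefix-closed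
set of alternating sequences starting with the starting player, and the winning
infinite plays have all their finite prefixes valid. -/
structure Wellformed (G : Game) : Prop where
  nil_mem : G.plays []
  prefix_closed : ∀ s t : List G.Move, G.plays (s ++ t) → G.plays s
  alternating : ∀ s, G.plays s → G.alt s
  win_sub : ∀ f, G.win f → G.InfPlay f

def Negative (G : Game) : Prop := G.start = false
def Positive (G : Game) : Prop := G.start = true

/-- Negation of a game: swap the Player/Opponent labelling and starting player;
the P-winning infinite plays become the complement (within the infinite plays). -/
def neg (A : Game) : Game where
  Move := A.Move
  lab := fun m => !A.lab m
  start := !A.start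
  plays := A.plays
  win := fun f => A.InfPlay f ∧ ¬ A.win f

/-- A game is bounded if there is a uniform bound on the length of its plays. -/
def Bounded (G : Game) : Prop := ∃ k, ∀ s, G.plays s → s.length ≤ k

/-- `W*`-membership for a growing family `r` of finite restrictions of an infinite
play to a component: either the restriction is infinite and assembles to a
P-winning infinite play, or it is eventually a fixed finite play ending in a
P-move. -/
def WStar (M : Game) (r : ℕ → List M.Move) : Prop :=
  (∃ g : ℕ → M.Move,
      (∀ (n i : ℕ) (h : i < (r n).length), (r n).get ⟨i, h⟩ = g i) ∧
      (∀ k, ∃ n, k ≤ (r n).length) ∧ M.win g) ∨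
  (∃ (s : List M.Move) (a : M.Move),
      (∃ n, ∀ m, n ≤ m → r m = s ++ [a]) ∧ M.lab a = true)

end Game

/-- Restriction of a sequence of tagged moves to the left component. -/
def projL {α β : Type} (s : List (α ⊕ β)) : List α := s.filterMap Sum.getLeft?

/-- Restriction of a sequence of tagged moves to the right component. -/
def projR {α β : Type} (s : List (α ⊕ β)) : List β := s.filterMap Sum.getRight?

/-- Tensor of negative games: interleavings where only Opponent switches. -/
def tensor (M N : Game) : Game where
  Move := M.Move ⊕ N.Move
  lab := Sum.elim M.lab N.lab
  start := false
  plays := fun s => M.plays (projL s) ∧ N.plays (projR s) ∧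
    altWith (Sum.elim M.lab N.lab) false s
  win := fun f =>
    M.WStar (fun n => projL (pref f n)) ∧ N.WStar (fun n => projR (pref f n))

/-- Sequoid (left merge) `A ⊘ N`: interleavings whose first move, if any, is in `A`. -/
def sequoid (A N : Game) : Game where
  Move := A.Move ⊕ N.Move
  lab := Sum.elim A.lab N.lab
  start := A.start
  plays := fun s => A.plays (projL s) ∧ N.plays (projR s) ∧
    altWith (Sum.elim A.lab N.lab) A.start s ∧ (projL s = [] → projR s = [])
  win := fun f =>
    A.WStar (fun n => projL (pref f n)) ∧ N.WStar (fun n => projR (pref f n))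

/-- With `L & N`: Opponent's first move chooses a component and play stays there. -/
def withGame (L N : Game) : Game where
  Move := L.Move ⊕ N.Move
  lab := Sum.elim L.lab N.lab
  start := false
  plays := fun s => L.plays (projL s) ∧ N.plays (projR s) ∧
    (projL s = [] ∨ projR s = [])
  win := fun f =>
    (∃ g : ℕ → L.Move, (∀ n, f n = Sum.inl (g n)) ∧ L.win g) ∨
    (∃ g : ℕ → N.Move, (∀ n, f n = Sum.inr (g n)) ∧ N.win g)

/-- Restriction to the `i`-th copy. -/
def copyProj (N : Game) (i : ℕ) (s : List (N.Move × ℕ)) : List N.Move :=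
  s.filterMap fun m => if m.2 = i then some m.1 else none

/-- Exponential `!N`: countably many copies, opened in increasing order. -/
def bang (N : Game) : Game where
  Move := N.Move × ℕ
  lab := fun m => N.lab m.1
  start := false
  plays := fun s =>
    (∀ i, N.plays (copyProj N i s)) ∧
    (∀ i, copyProj N i s = [] → copyProj N (i + 1) s = []) ∧
    altWith (fun m => N.lab m.1) false s
  win := fun f => ∀ i, (Game.WStar N fun n => copyProj N i (pref f n))

/-- The one-move negative game `⊥`. -/
def botGame : Game where
  Move := PUnit
  lab := fun _ => false
  start := false
  plays := fun s => s = [] ∨ s = [PUnit.unit]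
  win := fun _ => False

/-- Affine implication `A ⊸ B` of negative games: an interleaving of a play of `B`
with a play of `A^⊥`, starting in `B`. -/
def linHom (A B : Game) : Game where
  Move := B.Move ⊕ A.Move
  lab := Sum.elim B.lab fun a => !A.lab a
  start := false
  plays := fun s => B.plays (projL s) ∧ A.plays (projR s) ∧
    altWith (Sum.elim B.lab fun a => !A.lab a) false s ∧
    (projL s = [] → projR s = [])
  win := fun f =>
    B.WStar (fun n => projL (pref f n)) ∨
    (Game.neg A).WStar (fun n => projR (pref f n))

/-- A set of plays is a strategy for Player. -/
def IsStrategy (G : Game) (S : Set (List G.Move)) : Prop :=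
  (∀ s ∈ S, G.plays s) ∧
  (∀ (s : List G.Move) (a : G.Move), s ++ [a] ∈ S → G.lab a = true) ∧
  (∀ (s : List G.Move) (a b : G.Move), s ++ [a, b] ∈ S → s ∈ S) ∧
  (∀ (s : List G.Move) (a b : G.Move), s ++ [a] ∈ S → s ++ [b] ∈ S → a = b) ∧
  (S = ∅ → G.start = true) ∧
  (([] : List G.Move) ∈ S → G.start = false)

/-- A strategy is total if it is nonempty and responds to every Opponent extension. -/
def IsTotal (G : Game) (S : Set (List G.Move)) : Prop :=
  S.Nonempty ∧ ∀ s ∈ S, ∀ a : G.Move, G.plays (s ++ [a]) → ∃ b, s ++ [a, b] ∈ S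

/-- A strategy is winning if it is total and every infinite play all of whose
P-ending prefixes lie in it is P-winning. -/
def IsWinning (G : Game) (S : Set (List G.Move)) : Prop :=
  IsTotal G S ∧
  ∀ f : ℕ → G.Move, G.InfPlay f →
    (∀ n, G.lab (f n) = true → pref f (n + 1) ∈ S) → G.win f

section Compose

variable (A B C : Game)

/-- Restrict an interaction move to the component `A ⊸ B`. -/
def toAB : A.Move ⊕ B.Move ⊕ C.Move → Option (B.Move ⊕ A.Move)
  | Sum.inl a => some (Sum.inr a)
  | Sum.inr (Sum.inl b) => some (Sum.inl b)
  | Sum.inr (Sum.inr _) => none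

/-- Restrict an interaction move to the component `B ⊸ C`. -/
def toBC : A.Move ⊕ B.Move ⊕ C.Move → Option (C.Move ⊕ B.Move)
  | Sum.inl _ => none
  | Sum.inr (Sum.inl b) => some (Sum.inr b)
  | Sum.inr (Sum.inr c) => some (Sum.inl c)

/-- Restrict an interaction move to the component `A ⊸ C`. -/
def toAC : A.Move ⊕ B.Move ⊕ C.Move → Option (C.Move ⊕ A.Move)
  | Sum.inl a => some (Sum.inr a)
  | Sum.inr (Sum.inl _) => none
  | Sum.inr (Sum.inr c) => some (Sum.inl c)

/-- Composition of strategies by parallel composition plus hiding. -/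
def composeSet (S : Set (List (linHom A B).Move)) (T : Set (List (linHom B C).Move)) :
    Set (List (linHom A C).Move) :=
  { t | ∃ u : List (A.Move ⊕ B.Move ⊕ C.Move),
      u.filterMap (toAB A B C) ∈ S ∧ u.filterMap (toBC A B C) ∈ T ∧
      t = u.filterMap (toAC A B C) }

end Compose

/-- The copycat strategy on `A ⊸ A`. -/
def copycatSet (A : Game) : Set (List (linHom A A).Move) :=
  { s | (linHom A A).plays s ∧
      ∀ t : List (linHom A A).Move, t <+: s → t.length % 2 = 0 → projL t = projR t }

/-- A forest isomorphism between games: a prefix-monotone bijection between the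
sets of plays (with prefix-monotone inverse) which respects the P-winning
infinite plays. -/
structure ForestIso (A B : Game) where
  startEq : A.start = B.start
  toFun : {s : List A.Move // A.plays s} → {t : List B.Move // B.plays t}
  invFun : {t : List B.Move // B.plays t} → {s : List A.Move // A.plays s}
  left_inv : Function.LeftInverse invFun toFun
  right_inv : Function.RightInverse invFun toFun
  mono : ∀ s t, s.1 <+: t.1 → (toFun s).1 <+: (toFun t).1
  mono_inv : ∀ s t, s.1 <+: t.1 → (invFun s).1 <+: (invFun t).1
  win_iff : ∀ (f : ℕ → A.Move) (g : ℕ → B.Move),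
    A.InfPlay f → B.InfPlay g →
    (∀ (n : ℕ) (h : A.plays (pref f n)),
        ∀ (i : ℕ) (hi : i < (toFun ⟨pref f n, h⟩).1.length),
          (toFun ⟨pref f n, h⟩).1.get ⟨i, hi⟩ = g i) →
    (A.win f ↔ B.win g)



section ComposeProof

open List

/-! ### Generic list and alternation lemmas -/

@[simp] lemma projL_nil {α β : Type} : projL ([] : List (α ⊕ β)) = [] := rfl
@[simp] lemma projR_nil {α β : Type} : projR ([] : List (α ⊕ β)) = [] := rfl
@[simp] lemma projL_cons_inl {α β : Type} (a : α) (s : List (α ⊕ β)) :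
    projL (Sum.inl a :: s) = a :: projL s := rfl
@[simp] lemma projL_cons_inr {α β : Type} (b : β) (s : List (α ⊕ β)) :
    projL (Sum.inr b :: s) = projL s := rfl
@[simp] lemma projR_cons_inl {α β : Type} (a : α) (s : List (α ⊕ β)) :
    projR (Sum.inl a :: s) = projR s := rfl
@[simp] lemma projR_cons_inr {α β : Type} (b : β) (s : List (α ⊕ β)) :
    projR (Sum.inr b :: s) = b :: projR s := rfl
@[simp] lemma projL_append {α β : Type} (s t : List (α ⊕ β)) :
    projL (s ++ t) = projL s ++ projL t := List.filterMap_append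
@[simp] lemma projR_append {α β : Type} (s t : List (α ⊕ β)) :
    projR (s ++ t) = projR s ++ projR t := List.filterMap_append

lemma length_eq_projL_add_projR {α β : Type} (s : List (α ⊕ β)) :
    s.length = (projL s).length + (projR s).length := by
  induction s with
  | nil => simp
  | cons x t ih => cases x <;> simp <;> omega

lemma projL_prefix {α β : Type} {s t : List (α ⊕ β)} (h : s <+: t) :
    projL s <+: projL t := h.filterMap _
lemma projR_prefix {α β : Type} {s t : List (α ⊕ β)} (h : s <+: t) :
    projR s <+: projR t := h.filterMap _

lemma altWith_nil {M : Type} (lab : M → Bool) (b : Bool) : altWith lab b [] := by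
  intro i h; simp at h

lemma altWith_prefix {M : Type} {lab : M → Bool} {b : Bool} {s t : List M}
    (h : altWith lab b t) (hst : s <+: t) : altWith lab b s := by
  obtain ⟨r, rfl⟩ := hst
  intro i hi
  have hi' : i < (s ++ r).length := by simp; omega
  have := h i hi'
  rw [List.get_eq_getElem, List.getElem_append_left hi] at this
  rw [List.get_eq_getElem]
  exact this

lemma altWith_concat_iff {M : Type} {lab : M → Bool} {m : M} {s : List M} :
    altWith lab false (s ++ [m]) ↔
      altWith lab false s ∧ lab m = decide (s.length % 2 = 1) := by
  constructor
  · intro h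
    refine ⟨altWith_prefix h ⟨[m], rfl⟩, ?_⟩
    have hl : s.length < (s ++ [m]).length := by simp
    have := h s.length hl
    rw [List.get_eq_getElem, List.getElem_append_right (le_refl _)] at this
    simpa using this
  · rintro ⟨h1, h2⟩ i hi
    rw [List.get_eq_getElem]
    rcases lt_or_eq_of_le (Nat.lt_succ_iff.mp (by simpa using hi)) with h | h
    · rw [List.getElem_append_left h]
      have := h1 i h
      rwa [List.get_eq_getElem] at this
    · subst h
      rw [List.getElem_append_right (le_refl _)]
      simpa using h2

@[simp] lemma projL_singleton_inl {α β : Type} (a : α) :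
    projL ([Sum.inl a] : List (α ⊕ β)) = [a] := rfl
@[simp] lemma projL_singleton_inr {α β : Type} (b : β) :
    projL ([Sum.inr b] : List (α ⊕ β)) = [] := rfl
@[simp] lemma projR_singleton_inl {α β : Type} (a : α) :
    projR ([Sum.inl a] : List (α ⊕ β)) = [] := rfl
@[simp] lemma projR_singleton_inr {α β : Type} (b : β) :
    projR ([Sum.inr b] : List (α ⊕ β)) = [b] := rfl

/-- Plays of a negative wellformed game alternate starting from `false`. -/
lemma alt_of_plays {G : Game} (hw : G.Wellformed) (hneg : G.Negative)
    {s : List G.Move} (hs : G.plays s) : altWith G.lab false s := by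
  have := hw.alternating s hs
  rwa [Game.alt, hneg] at this

/-- The switching lemma: in an interleaving alternating from `false` whose two
components also alternate from `false` (with the right-hand labels negated),
if the right component has odd length then so does the left. -/
lemma switching {α β : Type} {lB : α → Bool} {lA : β → Bool} {s : List (α ⊕ β)}
    (hs : altWith (Sum.elim lB fun a => !lA a) false s)
    (hL : altWith lB false (projL s)) (hR : altWith lA false (projR s)) :
    Odd (projR s).length → Odd (projL s).length := by
  rcases List.eq_nil_or_concat s with rfl | ⟨t, m, rfl⟩
  · intro h; simp at h
  · rw [List.concat_eq_append] at hs hL hR ⊢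
    have hlen := length_eq_projL_add_projR t
    cases m with
    | inl b =>
      intro hodd
      have h1 := (altWith_concat_iff.mp hs).2
      have h2 := (altWith_concat_iff.mp
        (show altWith lB false (projL t ++ [b]) by simpa using hL)).2
      simp only [Sum.elim_inl] at h1
      rw [h2, decide_eq_decide] at h1
      have hodd' : (projR t).length % 2 = 1 := by
        have : Odd (projR t).length := by simpa using hodd
        exact Nat.odd_iff.mp this
      have hg : (projL (t ++ [Sum.inl b])).length = (projL t).length + 1 := by simp
      rw [Nat.odd_iff, hg]
      omega
    | inr a =>
      intro hodd
      have h1 := (altWith_concat_iff.mp hs).2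
      have h2 := (altWith_concat_iff.mp
        (show altWith lA false (projR t ++ [a]) by simpa using hR)).2
      simp only [Sum.elim_inr] at h1
      rw [h2, ← decide_not, decide_eq_decide] at h1
      have hodd' : ((projR t).length + 1) % 2 = 1 := by
        have : Odd ((projR t).length + 1) := by simpa using hodd
        exact Nat.odd_iff.mp this
      have hg : (projL (t ++ [Sum.inr a])).length = (projL t).length := by simp
      rw [Nat.odd_iff, hg]
      omega


/-! ### Interaction sequences -/

variable (A B C : Game)

/-- Projection of an interaction sequence to `A ⊸ B`. -/
def pAB (u : List (A.Move ⊕ B.Move ⊕ C.Move)) : List (B.Move ⊕ A.Move) :=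
  u.filterMap (toAB A B C)

/-- Projection of an interaction sequence to `B ⊸ C`. -/
def pBC (u : List (A.Move ⊕ B.Move ⊕ C.Move)) : List (C.Move ⊕ B.Move) :=
  u.filterMap (toBC A B C)

/-- Projection of an interaction sequence to `A ⊸ C`. -/
def pAC (u : List (A.Move ⊕ B.Move ⊕ C.Move)) : List (C.Move ⊕ A.Move) :=
  u.filterMap (toAC A B C)

variable {A B C}

@[simp] lemma pAB_nil : pAB A B C [] = [] := rfl
@[simp] lemma pBC_nil : pBC A B C [] = [] := rfl
@[simp] lemma pAC_nil : pAC A B C [] = [] := rfl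

@[simp] lemma pAB_append (u v : List (A.Move ⊕ B.Move ⊕ C.Move)) :
    pAB A B C (u ++ v) = pAB A B C u ++ pAB A B C v := List.filterMap_append
@[simp] lemma pBC_append (u v : List (A.Move ⊕ B.Move ⊕ C.Move)) :
    pBC A B C (u ++ v) = pBC A B C u ++ pBC A B C v := List.filterMap_append
@[simp] lemma pAC_append (u v : List (A.Move ⊕ B.Move ⊕ C.Move)) :
    pAC A B C (u ++ v) = pAC A B C u ++ pAC A B C v := List.filterMap_append

@[simp] lemma pAB_cons_A (a : A.Move) (u : List (A.Move ⊕ B.Move ⊕ C.Move)) :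
    pAB A B C (Sum.inl a :: u) = Sum.inr a :: pAB A B C u := rfl
@[simp] lemma pAB_cons_B (b : B.Move) (u : List (A.Move ⊕ B.Move ⊕ C.Move)) :
    pAB A B C (Sum.inr (Sum.inl b) :: u) = Sum.inl b :: pAB A B C u := rfl
@[simp] lemma pAB_cons_C (c : C.Move) (u : List (A.Move ⊕ B.Move ⊕ C.Move)) :
    pAB A B C (Sum.inr (Sum.inr c) :: u) = pAB A B C u := rfl
@[simp] lemma pBC_cons_A (a : A.Move) (u : List (A.Move ⊕ B.Move ⊕ C.Move)) :
    pBC A B C (Sum.inl a :: u) = pBC A B C u := rfl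
@[simp] lemma pBC_cons_B (b : B.Move) (u : List (A.Move ⊕ B.Move ⊕ C.Move)) :
    pBC A B C (Sum.inr (Sum.inl b) :: u) = Sum.inr b :: pBC A B C u := rfl
@[simp] lemma pBC_cons_C (c : C.Move) (u : List (A.Move ⊕ B.Move ⊕ C.Move)) :
    pBC A B C (Sum.inr (Sum.inr c) :: u) = Sum.inl c :: pBC A B C u := rfl
@[simp] lemma pAC_cons_A (a : A.Move) (u : List (A.Move ⊕ B.Move ⊕ C.Move)) :
    pAC A B C (Sum.inl a :: u) = Sum.inr a :: pAC A B C u := rfl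
@[simp] lemma pAC_cons_B (b : B.Move) (u : List (A.Move ⊕ B.Move ⊕ C.Move)) :
    pAC A B C (Sum.inr (Sum.inl b) :: u) = pAC A B C u := rfl
@[simp] lemma pAC_cons_C (c : C.Move) (u : List (A.Move ⊕ B.Move ⊕ C.Move)) :
    pAC A B C (Sum.inr (Sum.inr c) :: u) = Sum.inl c :: pAC A B C u := rfl

lemma pAB_prefix {u v : List (A.Move ⊕ B.Move ⊕ C.Move)} (h : u <+: v) :
    pAB A B C u <+: pAB A B C v := h.filterMap _
lemma pBC_prefix {u v : List (A.Move ⊕ B.Move ⊕ C.Move)} (h : u <+: v) :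
    pBC A B C u <+: pBC A B C v := h.filterMap _
lemma pAC_prefix {u v : List (A.Move ⊕ B.Move ⊕ C.Move)} (h : u <+: v) :
    pAC A B C u <+: pAC A B C v := h.filterMap _

/-- Cross identities: the `B`-moves seen from `A ⊸ B` and from `B ⊸ C` agree, etc. -/
lemma projR_pBC (u : List (A.Move ⊕ B.Move ⊕ C.Move)) :
    projR (pBC A B C u) = projL (pAB A B C u) := by
  induction u with
  | nil => rfl
  | cons x t ih => rcases x with a | b | c <;> simp [ih]

lemma projL_pAC (u : List (A.Move ⊕ B.Move ⊕ C.Move)) :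
    projL (pAC A B C u) = projL (pBC A B C u) := by
  induction u with
  | nil => rfl
  | cons x t ih => rcases x with a | b | c <;> simp [ih]

lemma projR_pAC (u : List (A.Move ⊕ B.Move ⊕ C.Move)) :
    projR (pAC A B C u) = projR (pAB A B C u) := by
  induction u with
  | nil => rfl
  | cons x t ih => rcases x with a | b | c <;> simp [ih]

variable (A B C)

/-- Numbers of `A`-, `B`- and `C`-moves in an interaction sequence. -/
def nA (u : List (A.Move ⊕ B.Move ⊕ C.Move)) : ℕ := (projR (pAB A B C u)).length
def nB (u : List (A.Move ⊕ B.Move ⊕ C.Move)) : ℕ := (projL (pAB A B C u)).length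
def nC (u : List (A.Move ⊕ B.Move ⊕ C.Move)) : ℕ := (projL (pBC A B C u)).length

variable {A B C}

@[simp] lemma nA_snoc_A (u) (a : A.Move) :
    nA A B C (u ++ [Sum.inl a]) = nA A B C u + 1 := by simp [nA]
@[simp] lemma nA_snoc_B (u) (b : B.Move) :
    nA A B C (u ++ [Sum.inr (Sum.inl b)]) = nA A B C u := by simp [nA]
@[simp] lemma nA_snoc_C (u) (c : C.Move) :
    nA A B C (u ++ [Sum.inr (Sum.inr c)]) = nA A B C u := by simp [nA]
@[simp] lemma nB_snoc_A (u) (a : A.Move) :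
    nB A B C (u ++ [Sum.inl a]) = nB A B C u := by simp [nB]
@[simp] lemma nB_snoc_B (u) (b : B.Move) :
    nB A B C (u ++ [Sum.inr (Sum.inl b)]) = nB A B C u + 1 := by simp [nB]
@[simp] lemma nB_snoc_C (u) (c : C.Move) :
    nB A B C (u ++ [Sum.inr (Sum.inr c)]) = nB A B C u := by simp [nB]
@[simp] lemma nC_snoc_A (u) (a : A.Move) :
    nC A B C (u ++ [Sum.inl a]) = nC A B C u := by simp [nC]
@[simp] lemma nC_snoc_B (u) (b : B.Move) :
    nC A B C (u ++ [Sum.inr (Sum.inl b)]) = nC A B C u := by simp [nC]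
@[simp] lemma nC_snoc_C (u) (c : C.Move) :
    nC A B C (u ++ [Sum.inr (Sum.inr c)]) = nC A B C u + 1 := by simp [nC]

lemma len_pAB (u : List (A.Move ⊕ B.Move ⊕ C.Move)) :
    (pAB A B C u).length = nB A B C u + nA A B C u := by
  rw [length_eq_projL_add_projR]; rfl
lemma len_pBC (u : List (A.Move ⊕ B.Move ⊕ C.Move)) :
    (pBC A B C u).length = nC A B C u + nB A B C u := by
  rw [length_eq_projL_add_projR, projR_pBC]; rfl
lemma len_pAC (u : List (A.Move ⊕ B.Move ⊕ C.Move)) :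
    (pAC A B C u).length = nC A B C u + nA A B C u := by
  rw [length_eq_projL_add_projR, projL_pAC, projR_pAC]; rfl

lemma linHom_plays_def (X Y : Game) (s : List (Y.Move ⊕ X.Move)) :
    (linHom X Y).plays s ↔ Y.plays (projL s) ∧ X.plays (projR s) ∧
      altWith (Sum.elim Y.lab fun a => !X.lab a) false s ∧
      (projL s = [] → projR s = []) := Iff.rfl

/-- Plays of `X ⊸ Y` are prefix-closed. -/
lemma linHom_plays_prefix {X Y : Game} (hXw : X.Wellformed) (hYw : Y.Wellformed)
    (hX : X.Negative) {s t : List (Y.Move ⊕ X.Move)}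
    (hs : (linHom X Y).plays s) (hts : t <+: s) : (linHom X Y).plays t := by
  rw [linHom_plays_def] at hs ⊢
  obtain ⟨hYp, hXp, halt, _⟩ := hs
  have haltt := altWith_prefix halt hts
  refine ⟨?_, ?_, haltt, ?_⟩
  · obtain ⟨r, hr⟩ := projL_prefix hts
    exact hYw.prefix_closed _ r (by rw [hr]; exact hYp)
  · obtain ⟨r, hr⟩ := projR_prefix hts
    exact hXw.prefix_closed _ r (by rw [hr]; exact hXp)
  · intro hL
    by_contra hR
    have ht : t ≠ [] := by rintro rfl; exact hR rfl
    obtain ⟨x, t', rfl⟩ := List.exists_cons_of_ne_nil ht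
    cases x with
    | inl y => simp at hL
    | inr x =>
      have h0 : (Sum.elim Y.lab fun a => !X.lab a) (Sum.inr x) =
          (false != decide (0 % 2 = 1)) := haltt 0 (by simp)
      simp at h0
      have hXalt : altWith X.lab false (projR s) := alt_of_plays hXw hX hXp
      have hpre : (x :: projR t') <+: projR s := by
        have := projR_prefix hts
        simpa using this
      have h1 := altWith_prefix hXalt hpre 0 (by simp)
      simp at h1
      rw [h1] at h0
      exact absurd h0 Bool.false_ne_true


/-- Bundled wellformedness/negativity context. -/
structure Nice (A B C : Game) : Prop where
  Aw : A.Wellformed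
  Bw : B.Wellformed
  Cw : C.Wellformed
  An : A.Negative
  Bn : B.Negative
  Cn : C.Negative

variable (A B C)

/-- A legal interaction prefix. -/
structure Good (u : List (A.Move ⊕ B.Move ⊕ C.Move)) : Prop where
  ab : (linHom A B).plays (pAB A B C u)
  bc : (linHom B C).plays (pBC A B C u)

variable {A B C}

lemma good_nil (hN : Nice A B C) : Good A B C [] := by
  constructor <;>
  · rw [linHom_plays_def]
    refine ⟨?_, ?_, altWith_nil _ _, fun _ => rfl⟩ <;>
      first
        | exact hN.Bw.nil_mem
        | exact hN.Aw.nil_mem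
        | exact hN.Cw.nil_mem

lemma good_prefix (hN : Nice A B C) {u v : List (A.Move ⊕ B.Move ⊕ C.Move)}
    (hu : Good A B C u) (hvu : v <+: u) : Good A B C v :=
  ⟨linHom_plays_prefix hN.Aw hN.Bw hN.An hu.ab (pAB_prefix hvu),
   linHom_plays_prefix hN.Bw hN.Cw hN.Bn hu.bc (pBC_prefix hvu)⟩

/-- Parity classification of interaction prefixes. -/
lemma good_class (hN : Nice A B C) {u : List (A.Move ⊕ B.Move ⊕ C.Move)}
    (hu : Good A B C u) :
    (nA A B C u % 2 = 1 → nB A B C u % 2 = 1) ∧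
    (nB A B C u % 2 = 1 → nC A B C u % 2 = 1) := by
  obtain ⟨hBp, hAp, habalt, -⟩ := (linHom_plays_def _ _ _).mp hu.ab
  obtain ⟨hCp, hBp', hbcalt, -⟩ := (linHom_plays_def _ _ _).mp hu.bc
  constructor
  · intro h
    have := switching habalt (alt_of_plays hN.Bw hN.Bn hBp)
      (alt_of_plays hN.Aw hN.An hAp) (Nat.odd_iff.mpr h)
    exact Nat.odd_iff.mp this
  · intro h
    have := switching hbcalt (alt_of_plays hN.Cw hN.Cn hCp)
      (alt_of_plays hN.Bw hN.Bn hBp') (Nat.odd_iff.mpr (by rwa [projR_pBC]))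
    exact Nat.odd_iff.mp this

lemma linHom_snoc_inl {X Y : Game} (hYw : Y.Wellformed) (hY : Y.Negative)
    {s : List (Y.Move ⊕ X.Move)} {y : Y.Move}
    (h : (linHom X Y).plays (s ++ [Sum.inl y])) :
    Y.lab y = decide (s.length % 2 = 1) ∧
    Y.lab y = decide ((projL s).length % 2 = 1) := by
  obtain ⟨hYp, -, halt, -⟩ := (linHom_plays_def _ _ _).mp h
  constructor
  · have := (altWith_concat_iff.mp halt).2
    simpa using this
  · have hYalt : altWith Y.lab false (projL (s ++ [Sum.inl y])) :=
      alt_of_plays hYw hY hYp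
    rw [projL_append, projL_singleton_inl] at hYalt
    exact (altWith_concat_iff.mp hYalt).2

lemma linHom_snoc_inr {X Y : Game} (hXw : X.Wellformed) (hX : X.Negative)
    {s : List (Y.Move ⊕ X.Move)} {x : X.Move}
    (h : (linHom X Y).plays (s ++ [Sum.inr x])) :
    (!X.lab x) = decide (s.length % 2 = 1) ∧
    X.lab x = decide ((projR s).length % 2 = 1) := by
  obtain ⟨-, hXp, halt, -⟩ := (linHom_plays_def _ _ _).mp h
  constructor
  · have := (altWith_concat_iff.mp halt).2
    simpa using this
  · have hXalt : altWith X.lab false (projR (s ++ [Sum.inr x])) :=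
      alt_of_plays hXw hX hXp
    rw [projR_append, projR_singleton_inr] at hXalt
    exact (altWith_concat_iff.mp hXalt).2

lemma good_snoc_A (hN : Nice A B C) {u : List (A.Move ⊕ B.Move ⊕ C.Move)} {a : A.Move}
    (hu : Good A B C (u ++ [Sum.inl a])) :
    (!A.lab a) = decide ((nB A B C u + nA A B C u) % 2 = 1) ∧
    A.lab a = decide (nA A B C u % 2 = 1) := by
  have h := hu.ab
  simp only [pAB_append, pAB_cons_A, pAB_nil] at h
  have := linHom_snoc_inr hN.Aw hN.An h
  rwa [len_pAB] at this

lemma good_snoc_B (hN : Nice A B C) {u : List (A.Move ⊕ B.Move ⊕ C.Move)} {b : B.Move}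
    (hu : Good A B C (u ++ [Sum.inr (Sum.inl b)])) :
    B.lab b = decide ((nB A B C u + nA A B C u) % 2 = 1) ∧
    (!B.lab b) = decide ((nC A B C u + nB A B C u) % 2 = 1) ∧
    B.lab b = decide (nB A B C u % 2 = 1) := by
  have h1 := hu.ab
  simp only [pAB_append, pAB_cons_B, pAB_nil] at h1
  have h2 := hu.bc
  simp only [pBC_append, pBC_cons_B, pBC_nil] at h2
  have e1 := linHom_snoc_inl hN.Bw hN.Bn h1
  have e2 := linHom_snoc_inr hN.Bw hN.Bn h2
  rw [len_pAB] at e1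
  rw [len_pBC] at e2
  exact ⟨e1.1, e2.1, e1.2⟩

lemma good_snoc_C (hN : Nice A B C) {u : List (A.Move ⊕ B.Move ⊕ C.Move)} {c : C.Move}
    (hu : Good A B C (u ++ [Sum.inr (Sum.inr c)])) :
    C.lab c = decide ((nC A B C u + nB A B C u) % 2 = 1) ∧
    C.lab c = decide (nC A B C u % 2 = 1) := by
  have h := hu.bc
  simp only [pBC_append, pBC_cons_C, pBC_nil] at h
  have := linHom_snoc_inl hN.Cw hN.Cn h
  rwa [len_pBC] at this

lemma mkGood_A (hN : Nice A B C) {u : List (A.Move ⊕ B.Move ⊕ C.Move)} {a : A.Move}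
    (hu : Good A B C u) (hplA : A.plays (projR (pAB A B C u) ++ [a]))
    (hlab : (!A.lab a) = decide ((nB A B C u + nA A B C u) % 2 = 1))
    (hB0 : projL (pAB A B C u) ≠ []) : Good A B C (u ++ [Sum.inl a]) := by
  constructor
  · simp only [pAB_append, pAB_cons_A, pAB_nil]
    rw [linHom_plays_def]
    obtain ⟨hBp, hAp, halt, -⟩ := (linHom_plays_def _ _ _).mp hu.ab
    refine ⟨by simpa using hBp, by simpa using hplA, ?_, ?_⟩
    · exact altWith_concat_iff.mpr ⟨halt, by simpa [len_pAB] using hlab⟩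
    · intro h
      simp only [projL_append, projL_singleton_inr, List.append_nil] at h
      exact absurd h hB0
  · simpa using hu.bc

lemma mkGood_B (hN : Nice A B C) {u : List (A.Move ⊕ B.Move ⊕ C.Move)} {b : B.Move}
    (hu : Good A B C u) (hplB : B.plays (projL (pAB A B C u) ++ [b]))
    (hlab1 : B.lab b = decide ((nB A B C u + nA A B C u) % 2 = 1))
    (hlab2 : (!B.lab b) = decide ((nC A B C u + nB A B C u) % 2 = 1))
    (hC0 : projL (pBC A B C u) ≠ []) : Good A B C (u ++ [Sum.inr (Sum.inl b)]) := by
  constructor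
  · simp only [pAB_append, pAB_cons_B, pAB_nil]
    rw [linHom_plays_def]
    obtain ⟨hBp, hAp, halt, -⟩ := (linHom_plays_def _ _ _).mp hu.ab
    refine ⟨by simpa using hplB, by simpa using hAp, ?_, by simp⟩
    · exact altWith_concat_iff.mpr ⟨halt, by simpa [len_pAB] using hlab1⟩
  · simp only [pBC_append, pBC_cons_B, pBC_nil]
    rw [linHom_plays_def]
    obtain ⟨hCp, hBp, halt, -⟩ := (linHom_plays_def _ _ _).mp hu.bc
    refine ⟨by simpa using hCp, ?_, ?_, ?_⟩
    · simp only [projR_append, projR_singleton_inr]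
      rw [projR_pBC]
      exact hplB
    · exact altWith_concat_iff.mpr ⟨halt, by simpa [len_pBC] using hlab2⟩
    · intro h
      simp only [projL_append, projL_singleton_inr, List.append_nil] at h
      exact absurd h hC0

lemma mkGood_C (hN : Nice A B C) {u : List (A.Move ⊕ B.Move ⊕ C.Move)} {c : C.Move}
    (hu : Good A B C u) (hplC : C.plays (projL (pBC A B C u) ++ [c]))
    (hlab : C.lab c = decide ((nC A B C u + nB A B C u) % 2 = 1)) :
    Good A B C (u ++ [Sum.inr (Sum.inr c)]) := by
  constructor
  · simpa using hu.ab
  · simp only [pBC_append, pBC_cons_C, pBC_nil]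
    rw [linHom_plays_def]
    obtain ⟨hCp, hBp, halt, -⟩ := (linHom_plays_def _ _ _).mp hu.bc
    refine ⟨by simpa using hplC, by simpa using hBp, ?_, by simp⟩
    · exact altWith_concat_iff.mpr ⟨halt, by simpa [len_pBC] using hlab⟩

/-- The visible part of a legal interaction alternates. -/
lemma good_altAC (hN : Nice A B C) {u : List (A.Move ⊕ B.Move ⊕ C.Move)}
    (hu : Good A B C u) :
    altWith (Sum.elim C.lab fun a => !A.lab a) false (pAC A B C u) := by
  induction u using List.reverseRecOn with
  | nil => simpa using altWith_nil (Sum.elim C.lab fun a => !A.lab a) false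
  | append_singleton u x ih =>
    have hgu : Good A B C u := good_prefix hN hu ⟨[x], rfl⟩
    have IH := ih hgu
    have hcl := good_class hN hgu
    rcases x with a | b | c
    · obtain ⟨e1, e2⟩ := good_snoc_A hN hu
      simp only [pAC_append, pAC_cons_A, pAC_nil]
      rw [altWith_concat_iff]
      refine ⟨IH, ?_⟩
      simp only [Sum.elim_inr]
      rw [len_pAC]
      rw [e2, ← decide_not, decide_eq_decide] at e1
      rw [e2, ← decide_not, decide_eq_decide]
      omega
    · simpa using IH
    · obtain ⟨e1, e2⟩ := good_snoc_C hN hu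
      simp only [pAC_append, pAC_cons_C, pAC_nil]
      rw [altWith_concat_iff]
      refine ⟨IH, ?_⟩
      simp only [Sum.elim_inl]
      rw [len_pAC]
      rw [e2, decide_eq_decide] at e1
      rw [e2, decide_eq_decide]
      omega

lemma good_CA (hN : Nice A B C) {u : List (A.Move ⊕ B.Move ⊕ C.Move)}
    (hu : Good A B C u) : nC A B C u = 0 → nA A B C u = 0 := by
  induction u using List.reverseRecOn with
  | nil => intro _; rfl
  | append_singleton u x ih =>
    have hgu : Good A B C u := good_prefix hN hu ⟨[x], rfl⟩
    have hcl := good_class hN hgu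
    rcases x with a | b | c
    · obtain ⟨e1, e2⟩ := good_snoc_A hN hu
      simp only [nA_snoc_A, nC_snoc_A]
      intro h
      have h0 := ih hgu h
      rw [e2, ← decide_not, decide_eq_decide] at e1
      omega
    · simpa using ih hgu
    · simp only [nA_snoc_C, nC_snoc_C]
      intro h
      omega

/-- The visible part of a legal interaction is a play of `A ⊸ C`. -/
lemma good_playsAC (hN : Nice A B C) {u : List (A.Move ⊕ B.Move ⊕ C.Move)}
    (hu : Good A B C u) : (linHom A C).plays (pAC A B C u) := by
  rw [linHom_plays_def]
  refine ⟨?_, ?_, good_altAC hN hu, ?_⟩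
  · rw [projL_pAC]
    exact ((linHom_plays_def _ _ _).mp hu.bc).1
  · rw [projR_pAC]
    exact ((linHom_plays_def _ _ _).mp hu.ab).2.1
  · intro h
    have h0 : nC A B C u = 0 := by
      rw [projL_pAC] at h
      simp [nC, h]
    have h1 := good_CA hN hu h0
    have : projR (pAB A B C u) = [] := List.length_eq_zero_iff.mp h1
    rw [projR_pAC, this]


/-! ### Strategy helpers -/

lemma strat_even {X Y : Game} {S : Set (List (linHom X Y).Move)}
    (hS : IsStrategy (linHom X Y) S) {s : List (Y.Move ⊕ X.Move)} (hs : s ∈ S) :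
    s.length % 2 = 0 := by
  rcases List.eq_nil_or_concat s with rfl | ⟨t, m, rfl⟩
  · simp
  · rw [List.concat_eq_append] at hs ⊢
    have hm := hS.2.1 t m hs
    have hp := hS.1 _ hs
    have e := (altWith_concat_iff.mp ((linHom_plays_def _ _ _).mp hp).2.2.1).2
    have h1 : decide (t.length % 2 = 1) = true := by rw [← e]; exact hm
    simp only [decide_eq_true_eq] at h1
    simp only [List.length_append, List.length_singleton]
    omega

lemma even_prefix_mem_aux {X Y : Game} {S : Set (List (linHom X Y).Move)}
    (hS : IsStrategy (linHom X Y) S) :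
    ∀ (n : ℕ) (s t : List (Y.Move ⊕ X.Move)), s.length ≤ n → s ∈ S → t <+: s →
      t.length % 2 = 0 → t ∈ S := by
  intro n
  induction n with
  | zero =>
    intro s t hlen hs hts _
    have hs0 : s = [] := List.length_eq_zero_iff.mp (Nat.le_zero.mp hlen)
    subst hs0
    have h0 := List.prefix_nil.mp hts
    exact h0 ▸ hs
  | succ n ih =>
    intro s t hlen hs hts hev
    by_cases heq : t = s
    · exact heq ▸ hs
    · have hslen := strat_even hS hs
      have htlt : t.length < s.length :=
        lt_of_le_of_ne hts.length_le (fun h => heq (hts.eq_of_length h))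
      have h2 : t.length + 2 ≤ s.length := by omega
      rcases List.eq_nil_or_concat s with rfl | ⟨s1, m, rfl⟩
      · simp at htlt
      · rw [List.concat_eq_append] at *
        rcases List.eq_nil_or_concat s1 with rfl | ⟨s2, m', rfl⟩
        · simp at hslen
        · rw [List.concat_eq_append] at *
          have hs2 : s2 ∈ S := hS.2.2.1 s2 m' m (by have hs' := hs; simp only [List.append_assoc, List.singleton_append] at hs'; exact hs')
          have h3 : t.length ≤ s2.length := by
            simp only [List.length_append, List.length_singleton] at h2
            omega
          have h4 := List.prefix_iff_eq_take.mp hts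
          rw [List.append_assoc, List.take_append_of_le_length h3] at h4
          have htpre : t <+: s2 := h4 ▸ List.take_prefix _ _
          apply ih s2 t _ hs2 htpre hev
          simp only [List.length_append, List.length_singleton] at hlen
          omega

lemma even_prefix_mem {X Y : Game} {S : Set (List (linHom X Y).Move)}
    (hS : IsStrategy (linHom X Y) S) {s t : List (Y.Move ⊕ X.Move)}
    (hs : s ∈ S) (hts : t <+: s) (hev : t.length % 2 = 0) : t ∈ S :=
  even_prefix_mem_aux hS s.length s t le_rfl hs hts hev

lemma nil_mem_strategy {X Y : Game} {S : Set (List (linHom X Y).Move)}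
    (hS : IsStrategy (linHom X Y) S) (hSt : IsTotal (linHom X Y) S) :
    ([] : List (Y.Move ⊕ X.Move)) ∈ S := by
  obtain ⟨x, hx⟩ := hSt.1
  exact even_prefix_mem hS hx List.nil_prefix (by simp)


/-! ### Determinism of the interaction -/

lemma next_unique (hN : Nice A B C)
    {S : Set (List (linHom A B).Move)} {T : Set (List (linHom B C).Move)}
    (hS : IsStrategy (linHom A B) S) (hT : IsStrategy (linHom B C) T)
    {w : List (A.Move ⊕ B.Move ⊕ C.Move)} {x y : A.Move ⊕ B.Move ⊕ C.Move}
    (hx : Good A B C (w ++ [x])) (hy : Good A B C (w ++ [y]))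
    (hxS : ∃ s ∈ S, pAB A B C (w ++ [x]) <+: s)
    (hyS : ∃ s ∈ S, pAB A B C (w ++ [y]) <+: s)
    (hxT : ∃ t ∈ T, pBC A B C (w ++ [x]) <+: t)
    (hyT : ∃ t ∈ T, pBC A B C (w ++ [y]) <+: t)
    (hz : (nC A B C w + nA A B C w) % 2 = 0 →
      ∃ z, pAC A B C (w ++ [x]) <+: z ∧ pAC A B C (w ++ [y]) <+: z) :
    x = y := by
  have hw : Good A B C w := good_prefix hN hx ⟨[x], by simp⟩
  have hcl := good_class hN hw
  by_cases hp : (nB A B C w + nA A B C w) % 2 = 1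
  · -- σ is to move: no C-move possible, and the AB-projection is determined.
    have notC : ∀ c : C.Move, ¬ Good A B C (w ++ [Sum.inr (Sum.inr c)]) := by
      intro c hg
      obtain ⟨e1, e2⟩ := good_snoc_C hN hg
      rw [e2, decide_eq_decide] at e1
      omega
    -- the AB image of the next move
    have key : ∀ m : A.Move ⊕ B.Move ⊕ C.Move, Good A B C (w ++ [m]) →
        (∃ s ∈ S, pAB A B C (w ++ [m]) <+: s) →
        ∃ m', pAB A B C (w ++ [m]) = pAB A B C w ++ [m'] ∧
          pAB A B C w ++ [m'] ∈ S ∧ toAB A B C m = some m' := by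
      rintro m hg ⟨s, hsS, hpre⟩
      rcases m with a | b | c
      · refine ⟨Sum.inr a, by simp, ?_, rfl⟩
        apply even_prefix_mem hS hsS (by simp only [pAB_append, pAB_cons_A, pAB_nil] at hpre; exact hpre)
        show (pAB A B C w ++ [Sum.inr a]).length % 2 = 0
        simp only [List.length_append, List.length_singleton, len_pAB]
        omega
      · refine ⟨Sum.inl b, by simp, ?_, rfl⟩
        apply even_prefix_mem hS hsS (by simp only [pAB_append, pAB_cons_B, pAB_nil] at hpre; exact hpre)
        show (pAB A B C w ++ [Sum.inl b]).length % 2 = 0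
        simp only [List.length_append, List.length_singleton, len_pAB]
        omega
      · exact absurd hg (notC c)
    obtain ⟨mx, hmx1, hmx2, hmx3⟩ := key x hx hxS
    obtain ⟨my, hmy1, hmy2, hmy3⟩ := key y hy hyS
    have := hS.2.2.2.1 (pAB A B C w) mx my hmx2 hmy2
    subst this
    -- toAB is injective on non-C moves
    rcases x with a | b | c <;> rcases y with a' | b' | c' <;>
      simp [toAB] at hmx3 hmy3 <;> try (exact absurd hx (notC _)) 
    all_goals try (exact absurd hy (notC _))
    all_goals try (exact absurd hx (notC _))
    · rw [← hmx3] at hmy3; simp at hmy3; rw [hmy3]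
    · rw [← hmx3] at hmy3; simp at hmy3
    · rw [← hmx3] at hmy3; simp at hmy3
    · rw [← hmx3] at hmy3; simp at hmy3; rw [hmy3]
  · by_cases hq : (nC A B C w + nB A B C w) % 2 = 1
    · -- τ is to move
      have notA : ∀ a : A.Move, ¬ Good A B C (w ++ [Sum.inl a]) := by
        intro a hg
        obtain ⟨e1, e2⟩ := good_snoc_A hN hg
        rw [e2, ← decide_not, decide_eq_decide] at e1
        omega
      have key : ∀ m : A.Move ⊕ B.Move ⊕ C.Move, Good A B C (w ++ [m]) →
          (∃ t ∈ T, pBC A B C (w ++ [m]) <+: t) →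
          ∃ m', pBC A B C (w ++ [m]) = pBC A B C w ++ [m'] ∧
            pBC A B C w ++ [m'] ∈ T ∧ toBC A B C m = some m' := by
        rintro m hg ⟨t, htT, hpre⟩
        rcases m with a | b | c
        · exact absurd hg (notA a)
        · refine ⟨Sum.inr b, by simp, ?_, rfl⟩
          apply even_prefix_mem hT htT (by simp only [pBC_append, pBC_cons_B, pBC_nil] at hpre; exact hpre)
          show (pBC A B C w ++ [Sum.inr b]).length % 2 = 0
          simp only [List.length_append, List.length_singleton, len_pBC]
          omega
        · refine ⟨Sum.inl c, by simp, ?_, rfl⟩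
          apply even_prefix_mem hT htT (by simp only [pBC_append, pBC_cons_C, pBC_nil] at hpre; exact hpre)
          show (pBC A B C w ++ [Sum.inl c]).length % 2 = 0
          simp only [List.length_append, List.length_singleton, len_pBC]
          omega
      obtain ⟨mx, hmx1, hmx2, hmx3⟩ := key x hx hxT
      obtain ⟨my, hmy1, hmy2, hmy3⟩ := key y hy hyT
      have := hT.2.2.2.1 (pBC A B C w) mx my hmx2 hmy2
      subst this
      rcases x with a | b | c <;> rcases y with a' | b' | c' <;>
        simp [toBC] at hmx3 hmy3
      all_goals try (exact absurd hx (notA _))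
      all_goals try (exact absurd hy (notA _))
      · rw [← hmx3] at hmy3; simp at hmy3; rw [hmy3]
      · rw [← hmx3] at hmy3; simp at hmy3
      · rw [← hmx3] at hmy3; simp at hmy3
      · rw [← hmx3] at hmy3; simp at hmy3; rw [hmy3]
    · -- external Opponent is to move
      have notB : ∀ b : B.Move, ¬ Good A B C (w ++ [Sum.inr (Sum.inl b)]) := by
        intro b hg
        obtain ⟨f1, f2, f3⟩ := good_snoc_B hN hg
        rw [f1, ← decide_not, decide_eq_decide] at f2
        omega
      have hr : (nC A B C w + nA A B C w) % 2 = 0 := by omega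
      obtain ⟨z, hz1, hz2⟩ := hz hr
      have key : ∀ m : A.Move ⊕ B.Move ⊕ C.Move, Good A B C (w ++ [m]) →
          pAC A B C (w ++ [m]) <+: z →
          ∃ m', pAC A B C (w ++ [m]) = pAC A B C w ++ [m'] ∧
            toAC A B C m = some m' := by
        intro m hg hpre
        rcases m with a | b | c
        · exact ⟨Sum.inr a, by simp, rfl⟩
        · exact absurd hg (notB b)
        · exact ⟨Sum.inl c, by simp, rfl⟩
      obtain ⟨mx, hmx1, hmx3⟩ := key x hx hz1
      obtain ⟨my, hmy1, hmy3⟩ := key y hy hz2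
      rw [hmx1] at hz1
      rw [hmy1] at hz2
      have e1 := List.prefix_iff_eq_take.mp hz1
      have e2 := List.prefix_iff_eq_take.mp hz2
      simp only [List.length_append, List.length_singleton] at e1 e2
      have e3 : pAC A B C w ++ [mx] = pAC A B C w ++ [my] := e1.trans e2.symm
      have e4 : mx = my := by simpa using e3
      subst e4
      rcases x with a | b | c <;> rcases y with a' | b' | c' <;>
        simp [toAC] at hmx3 hmy3
      all_goals try (exact absurd hx (notB _))
      all_goals try (exact absurd hy (notB _))
      · rw [← hmx3] at hmy3; simp at hmy3; rw [hmy3]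
      · rw [← hmx3] at hmy3; simp at hmy3
      · rw [← hmx3] at hmy3; simp at hmy3
      · rw [← hmx3] at hmy3; simp at hmy3; rw [hmy3]


lemma len_pAC_snoc_le {u : List (A.Move ⊕ B.Move ⊕ C.Move)}
    {x : A.Move ⊕ B.Move ⊕ C.Move} :
    (pAC A B C (u ++ [x])).length ≤ (pAC A B C u).length + 1 := by
  rcases x with a | b | c <;> simp

lemma interaction_unique (hN : Nice A B C)
    {S : Set (List (linHom A B).Move)} {T : Set (List (linHom B C).Move)}
    (hS : IsStrategy (linHom A B) S) (hT : IsStrategy (linHom B C) T)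
    {u1 u2 : List (A.Move ⊕ B.Move ⊕ C.Move)}
    (h1 : Good A B C u1) (h2 : Good A B C u2)
    (h1S : pAB A B C u1 ∈ S) (h1T : pBC A B C u1 ∈ T)
    (h2S : pAB A B C u2 ∈ S) (h2T : pBC A B C u2 ∈ T)
    {s : List (C.Move ⊕ A.Move)} {m1 m2 : C.Move ⊕ A.Move}
    (e1 : pAC A B C u1 = s ++ [m1]) (e2 : pAC A B C u2 = s ++ [m2]) :
    m1 = m2 := by
  have hsodd : s.length % 2 = 1 := by
    have q1 := strat_even hS h1S
    have q2 := strat_even hT h1T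
    rw [len_pAB] at q1
    rw [len_pBC] at q2
    have q3 : (pAC A B C u1).length = s.length + 1 := by rw [e1]; simp
    rw [len_pAC] at q3
    omega
  have key : ∀ n, n ≤ min u1.length u2.length → (m1 = m2 ∨ u1.take n = u2.take n) := by
    intro n
    induction n with
    | zero => intro _; right; simp
    | succ n ih =>
      intro hn
      rcases ih (by omega) with h | hw
      · exact Or.inl h
      · have hn1 : n < u1.length := by omega
        have hn2 : n < u2.length := by omega
        obtain ⟨w, hw1, hw2⟩ : ∃ w, u1.take n = w ∧ u2.take n = w := ⟨_, rfl, hw.symm⟩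
        have hx : w ++ [u1[n]] = u1.take (n + 1) := by
          rw [List.take_succ, List.getElem?_eq_getElem hn1, hw1]; rfl
        have hy : w ++ [u2[n]] = u2.take (n + 1) := by
          rw [List.take_succ, List.getElem?_eq_getElem hn2, hw2]; rfl
        have hpx : w ++ [u1[n]] <+: u1 := hx ▸ List.take_prefix _ _
        have hpy : w ++ [u2[n]] <+: u2 := hy ▸ List.take_prefix _ _
        by_cases hcase : pAC A B C w = s ++ [m1]
        · left
          have hp2 : pAC A B C w <+: s ++ [m2] := by
            rw [← e2]
            exact pAC_prefix (hw2 ▸ List.take_prefix n u2)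
          rw [hcase] at hp2
          have := hp2.eq_of_length (by simp)
          simpa using this
        · have hxy : u1[n] = u2[n] := by
            apply next_unique hN hS hT (good_prefix hN h1 hpx) (good_prefix hN h2 hpy)
              ⟨_, h1S, pAB_prefix hpx⟩ ⟨_, h2S, pAB_prefix hpy⟩
              ⟨_, h1T, pBC_prefix hpx⟩ ⟨_, h2T, pBC_prefix hpy⟩
            intro hr
            have hwpre : pAC A B C w <+: s ++ [m1] := by
              rw [← e1]; exact pAC_prefix (hw1 ▸ List.take_prefix n u1)
            have hwlt : (pAC A B C w).length < s.length := by
              have hle := hwpre.length_le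
              simp only [List.length_append, List.length_singleton] at hle
              rcases Nat.lt_or_ge (pAC A B C w).length s.length with h' | h'
              · exact h'
              · exfalso
                apply hcase
                exact hwpre.eq_of_length (by have hlen := len_pAC (A := A) (B := B) (C := C) w; simp; omega)
            refine ⟨s, ?_, ?_⟩
            · have hpre : pAC A B C (w ++ [u1[n]]) <+: s ++ [m1] := by
                rw [← e1]; exact pAC_prefix hpx
              rcases List.prefix_concat_iff.mp hpre with hq | hq
              · exfalso
                have hql := congrArg List.length hq
                have hsn := len_pAC_snoc_le (u := w) (x := u1[n])
                simp only [List.length_append, List.length_singleton] at hql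
                omega
              · exact hq
            · have hpre : pAC A B C (w ++ [u2[n]]) <+: s ++ [m2] := by
                rw [← e2]; exact pAC_prefix hpy
              rcases List.prefix_concat_iff.mp hpre with hq | hq
              · exfalso
                have hql := congrArg List.length hq
                have hsn := len_pAC_snoc_le (u := w) (x := u2[n])
                simp only [List.length_append, List.length_singleton] at hql
                omega
              · exact hq
          right
          rw [← hx, ← hy, hxy]
  rcases key (min u1.length u2.length) le_rfl with h | h
  · exact h
  · rcases Nat.le_total u1.length u2.length with hle | hle
    · rw [min_eq_left hle, List.take_length] at h
      have hpre : u1 <+: u2 := h ▸ List.take_prefix _ _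
      have := pAC_prefix hpre
      rw [e1, e2] at this
      have := this.eq_of_length (by simp)
      simpa using this
    · rw [min_eq_right hle, List.take_length] at h
      have hpre : u2 <+: u1 := h.symm ▸ List.take_prefix _ _
      have := pAC_prefix hpre
      rw [e1, e2] at this
      have := this.eq_of_length (by simp)
      simpa using this.symm


/-! ### Cutting an interaction at a given visible length -/

lemma exists_cut (u : List (A.Move ⊕ B.Move ⊕ C.Move)) (k : ℕ)
    (hk : k ≤ (pAC A B C u).length) :
    ∃ v, v <+: u ∧ (pAC A B C v).length = k := by
  induction u using List.reverseRecOn with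
  | nil => exact ⟨[], List.prefix_rfl, by simp at hk ⊢; omega⟩
  | append_singleton u x ih =>
    by_cases h : k ≤ (pAC A B C u).length
    · obtain ⟨v, hv, hl⟩ := ih h
      exact ⟨v, hv.trans ⟨[x], rfl⟩, hl⟩
    · refine ⟨u ++ [x], List.prefix_rfl, ?_⟩
      rcases x with a | b | c <;>
        simp only [pAC_append, pAC_cons_A, pAC_cons_B, pAC_cons_C, pAC_nil,
          List.length_append, List.length_singleton, List.length_nil,
          List.append_nil] at hk h ⊢ <;> omega

/-! ### Totality: the ping-pong argument -/

lemma pingpong (hN : Nice A B C)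
    {S : Set (List (linHom A B).Move)} {T : Set (List (linHom B C).Move)}
    (hS : IsStrategy (linHom A B) S) (hSt : IsTotal (linHom A B) S)
    (hT : IsStrategy (linHom B C) T) (hTt : IsTotal (linHom B C) T)
    {kB : ℕ} (hkB : ∀ s, B.plays s → s.length ≤ kB) :
    ∀ (n : ℕ) (u : List (A.Move ⊕ B.Move ⊕ C.Move)), Good A B C u →
      ((pAB A B C u ∈ S ∧ ∃ (w : List (C.Move ⊕ B.Move)) (z : C.Move ⊕ B.Move),
          w ∈ T ∧ pBC A B C u = w ++ [z]) ∨
       (pBC A B C u ∈ T ∧ ∃ (w : List (B.Move ⊕ A.Move)) (z : B.Move ⊕ A.Move),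
          w ∈ S ∧ pAB A B C u = w ++ [z])) →
      kB < (projL (pAB A B C u)).length + n →
      ∃ v m, Good A B C (u ++ v) ∧ pAB A B C (u ++ v) ∈ S ∧ pBC A B C (u ++ v) ∈ T ∧
        pAC A B C (u ++ v) = pAC A B C u ++ [m] := by
  intro n
  induction n with
  | zero =>
    intro u hu _ hfuel
    exfalso
    have := hkB _ ((linHom_plays_def _ _ _).mp hu.ab).1
    omega
  | succ n ih =>
    intro u hu hstate hfuel
    have hcl := good_class hN hu
    rcases hstate with ⟨huS, w, z, hwT, hw⟩ | ⟨huT, w, z, hwS, hw⟩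
    · -- τ is to move
      have heAB : (nB A B C u + nA A B C u) % 2 = 0 := by
        have := strat_even hS huS; rwa [len_pAB] at this
      have heBC : (nC A B C u + nB A B C u) % 2 = 1 := by
        have h1 := strat_even hT hwT
        have h2 : (pBC A B C u).length = w.length + 1 := by rw [hw]; simp
        rw [len_pBC] at h2; omega
      have hplay : (linHom B C).plays (w ++ [z]) := hw ▸ hu.bc
      have hex : ∃ y : C.Move ⊕ B.Move, w ++ [z, y] ∈ T := hTt.2 w hwT z hplay
      obtain ⟨y, hy⟩ := hex
      have hy' : pBC A B C u ++ [y] ∈ T := by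
        have e : pBC A B C u ++ [y] = w ++ [z, y] := by rw [hw]; simp
        rw [e]; exact hy
      have hplay2 : (linHom B C).plays (pBC A B C u ++ [y]) := hT.1 _ hy'
      rcases y with c | b
      · -- τ answers in C : done
        have hplC : C.plays (projL (pBC A B C u) ++ [c]) := by
          have := ((linHom_plays_def _ _ _).mp hplay2).1
          simpa using this
        have hlabC : C.lab c = decide ((nC A B C u + nB A B C u) % 2 = 1) := by
          have := (linHom_snoc_inl hN.Cw hN.Cn hplay2).1
          rwa [len_pBC] at this
        refine ⟨[Sum.inr (Sum.inr c)], Sum.inl c, mkGood_C hN hu hplC hlabC, ?_, ?_, ?_⟩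
        · simpa using huS
        · simpa using hy'
        · simp
      · -- τ answers in B : hand over to σ
        have e := linHom_snoc_inr hN.Bw hN.Bn hplay2
        rw [len_pBC] at e
        have hBlab : B.lab b = false := by
          have h1 := e.1
          rw [show decide ((nC A B C u + nB A B C u) % 2 = 1) = true from by
            simp [heBC]] at h1
          simpa using h1
        have hplB : B.plays (projL (pAB A B C u) ++ [b]) := by
          have := ((linHom_plays_def _ _ _).mp hplay2).2.1
          rwa [projR_append, projR_singleton_inr, projR_pBC] at this
        have hC0 : projL (pBC A B C u) ≠ [] := by
          intro h0
          have : nC A B C u = 0 := by simp [nC, h0]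
          omega
        have hlab1 : B.lab b = decide ((nB A B C u + nA A B C u) % 2 = 1) :=
          hBlab.trans (decide_eq_false (by omega)).symm
        have hg2 : Good A B C (u ++ [Sum.inr (Sum.inl b)]) :=
          mkGood_B hN hu hplB hlab1 e.1 hC0
        obtain ⟨v, m, hG, hvS, hvT, hACeq⟩ := ih (u ++ [Sum.inr (Sum.inl b)]) hg2
          (Or.inr ⟨by simpa using hy', pAB A B C u, Sum.inl b, huS, by simp⟩)
          (by
            simp only [pAB_append, pAB_cons_B, pAB_nil, projL_append,
              projL_singleton_inl, List.length_append, List.length_singleton]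
            omega)
        refine ⟨Sum.inr (Sum.inl b) :: v, m, ?_, ?_, ?_, ?_⟩ <;>
          rw [List.append_cons]
        · exact hG
        · exact hvS
        · exact hvT
        · rw [hACeq]; simp
    · -- σ is to move
      have heBC : (nC A B C u + nB A B C u) % 2 = 0 := by
        have := strat_even hT huT; rwa [len_pBC] at this
      have heAB : (nB A B C u + nA A B C u) % 2 = 1 := by
        have h1 := strat_even hS hwS
        have h2 : (pAB A B C u).length = w.length + 1 := by rw [hw]; simp
        rw [len_pAB] at h2; omega
      have hplay : (linHom A B).plays (w ++ [z]) := hw ▸ hu.ab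
      have hex : ∃ y : B.Move ⊕ A.Move, w ++ [z, y] ∈ S := hSt.2 w hwS z hplay
      obtain ⟨y, hy⟩ := hex
      have hy' : pAB A B C u ++ [y] ∈ S := by
        have e : pAB A B C u ++ [y] = w ++ [z, y] := by rw [hw]; simp
        rw [e]; exact hy
      have hplay2 : (linHom A B).plays (pAB A B C u ++ [y]) := hS.1 _ hy'
      have hnBodd : nB A B C u % 2 = 1 := by omega
      rcases y with b | a
      · -- σ answers in B : hand over to τ
        have e := linHom_snoc_inl hN.Bw hN.Bn hplay2
        rw [len_pAB] at e
        have hBlab : B.lab b = true := e.1.trans (by simp [heAB])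
        have hplB : B.plays (projL (pAB A B C u) ++ [b]) := by
          have := ((linHom_plays_def _ _ _).mp hplay2).1
          simpa using this
        have hC0 : projL (pBC A B C u) ≠ [] := by
          intro h0
          have : nC A B C u = 0 := by simp [nC, h0]
          omega
        have hlab2 : (!B.lab b) = decide ((nC A B C u + nB A B C u) % 2 = 1) := by
          rw [hBlab]
          exact (decide_eq_false (by omega)).symm
        have hg2 : Good A B C (u ++ [Sum.inr (Sum.inl b)]) :=
          mkGood_B hN hu hplB e.1 hlab2 hC0
        obtain ⟨v, m, hG, hvS, hvT, hACeq⟩ := ih (u ++ [Sum.inr (Sum.inl b)]) hg2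
          (Or.inl ⟨by simpa using hy', pBC A B C u, Sum.inr b, huT, by simp⟩)
          (by
            simp only [pAB_append, pAB_cons_B, pAB_nil, projL_append,
              projL_singleton_inl, List.length_append, List.length_singleton]
            omega)
        refine ⟨Sum.inr (Sum.inl b) :: v, m, ?_, ?_, ?_, ?_⟩ <;>
          rw [List.append_cons]
        · exact hG
        · exact hvS
        · exact hvT
        · rw [hACeq]; simp
      · -- σ answers in A : done
        have e := linHom_snoc_inr hN.Aw hN.An hplay2
        rw [len_pAB] at e
        have hplA : A.plays (projR (pAB A B C u) ++ [a]) := by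
          have := ((linHom_plays_def _ _ _).mp hplay2).2.1
          simpa using this
        have hB0 : projL (pAB A B C u) ≠ [] := by
          intro h0
          have : nB A B C u = 0 := by simp [nB, h0]
          omega
        refine ⟨[Sum.inl a], Sum.inr a, mkGood_A hN hu hplA e.1 hB0, ?_, ?_, ?_⟩
        · simpa using hy'
        · simpa using huT
        · simp

end ComposeProof

/-- if `A`, `B`, `C` are bounded negative games and `σ : A ⊸ B`,
`τ : B ⊸ C` are total strategies, then the composite `τ ∘ σ` (parallel
composition plus hiding) is a total strategy on `A ⊸ C`. -/
theorem compose_total_of_bounded (A B C : Game)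
    (hAw : A.Wellformed) (hBw : B.Wellformed) (hCw : C.Wellformed)
    (hA : A.Negative) (hB : B.Negative) (hC : C.Negative)
    (hAb : A.Bounded) (hBb : B.Bounded) (hCb : C.Bounded)
    (S : Set (List (linHom A B).Move)) (T : Set (List (linHom B C).Move))
    (hS : IsStrategy (linHom A B) S) (hSt : IsTotal (linHom A B) S)
    (hT : IsStrategy (linHom B C) T) (hTt : IsTotal (linHom B C) T) :
    IsStrategy (linHom A C) (composeSet A B C S T) ∧
    IsTotal (linHom A C) (composeSet A B C S T) := by
  have hN : Nice A B C := ⟨hAw, hBw, hCw, hA, hB, hC⟩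
  obtain ⟨kB, hkB⟩ := hBb
  have nilS : ([] : List (B.Move ⊕ A.Move)) ∈ S := nil_mem_strategy hS hSt
  have nilT : ([] : List (C.Move ⊕ B.Move)) ∈ T := nil_mem_strategy hT hTt
  have nilComp : ([] : List (C.Move ⊕ A.Move)) ∈ composeSet A B C S T :=
    ⟨[], nilS, nilT, rfl⟩
  have goodOf : ∀ {u : List (A.Move ⊕ B.Move ⊕ C.Move)},
      pAB A B C u ∈ S → pBC A B C u ∈ T → Good A B C u :=
    fun hu1 hu2 => ⟨hS.1 _ hu1, hT.1 _ hu2⟩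
  constructor
  · refine ⟨?_, ?_, ?_, ?_, ?_, ?_⟩
    · rintro s ⟨u, hu1, hu2, rfl⟩
      exact good_playsAC hN (goodOf hu1 hu2)
    · rintro s a ⟨u, hu1, hu2, heq⟩
      have hu1' : pAB A B C u ∈ S := hu1
      have hu2' : pBC A B C u ∈ T := hu2
      have heq' : s ++ [a] = pAC A B C u := heq
      have hg := goodOf hu1' hu2'
      have halt := good_altAC hN hg
      rw [← heq'] at halt
      have e := (altWith_concat_iff.mp halt).2
      have hsl : s.length % 2 = 1 := by
        have q1 := strat_even hS hu1'
        rw [len_pAB] at q1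
        have q2 := strat_even hT hu2'
        rw [len_pBC] at q2
        have q3 : (pAC A B C u).length = s.length + 1 := by rw [← heq']; exact List.length_append
        rw [len_pAC] at q3
        omega
      exact e.trans (by simp only [decide_eq_true_eq]; exact hsl)
    · rintro s a b ⟨u, hu1, hu2, heq⟩
      have hu1' : pAB A B C u ∈ S := hu1
      have hu2' : pBC A B C u ∈ T := hu2
      have heq' : s ++ [a, b] = pAC A B C u := heq
      have hg := goodOf hu1' hu2'
      have hslen : s.length ≤ (pAC A B C u).length := by rw [← heq']; exact (List.prefix_append s [a, b]).length_le
      obtain ⟨v, hvu, hvlen⟩ := exists_cut u s.length hslen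
      have hgv : Good A B C v := good_prefix hN hg hvu
      have hvAC : pAC A B C v = s := by
        have hp : pAC A B C v <+: s ++ [a, b] := by
          rw [heq']; exact pAC_prefix hvu
        have h4 := List.prefix_iff_eq_take.mp hp
        rw [hvlen] at h4
        exact h4.trans List.take_left
      have hcl := good_class hN hgv
      have hse : s.length % 2 = 0 := by
        have q1 := strat_even hS hu1'
        rw [len_pAB] at q1
        have q2 := strat_even hT hu2'
        rw [len_pBC] at q2
        have q3 : (pAC A B C u).length = s.length + 2 := by rw [← heq']; exact List.length_append
        rw [len_pAC] at q3
        omega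
      have hr : (nC A B C v + nA A B C v) % 2 = 0 := by
        have hl := len_pAC (A := A) (B := B) (C := C) v
        rw [hvlen] at hl
        omega
      have hABv : pAB A B C v ∈ S :=
        even_prefix_mem hS hu1' (pAB_prefix hvu) (by rw [len_pAB]; omega)
      have hBCv : pBC A B C v ∈ T :=
        even_prefix_mem hT hu2' (pBC_prefix hvu) (by rw [len_pBC]; omega)
      exact ⟨v, hABv, hBCv, hvAC.symm⟩
    · rintro s m1 m2 ⟨u1, h1S, h1T, he1⟩ ⟨u2, h2S, h2T, he2⟩
      have h1S' : pAB A B C u1 ∈ S := h1S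
      have h1T' : pBC A B C u1 ∈ T := h1T
      have h2S' : pAB A B C u2 ∈ S := h2S
      have h2T' : pBC A B C u2 ∈ T := h2T
      have he1' : pAC A B C u1 = s ++ [m1] := he1.symm
      have he2' : pAC A B C u2 = s ++ [m2] := he2.symm
      exact interaction_unique hN hS hT (goodOf h1S' h1T') (goodOf h2S' h2T')
        h1S' h1T' h2S' h2T' he1' he2'
    · intro h
      exfalso
      rw [Set.eq_empty_iff_forall_notMem] at h
      exact h _ nilComp
    · intro _
      rfl
  · refine ⟨⟨[], nilComp⟩, ?_⟩
    intro s hs a hpl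
    obtain ⟨u, hu1, hu2, heq⟩ := hs
    have hu1' : pAB A B C u ∈ S := hu1
    have hu2' : pBC A B C u ∈ T := hu2
    have heq' : s = pAC A B C u := heq
    subst heq'
    have hg := goodOf hu1' hu2'
    have hcl := good_class hN hg
    have heAB : (nB A B C u + nA A B C u) % 2 = 0 := by
      have := strat_even hS hu1'; rwa [len_pAB] at this
    have heBC : (nC A B C u + nB A B C u) % 2 = 0 := by
      have := strat_even hT hu2'; rwa [len_pBC] at this
    rcases a with c | a0
    · -- Opponent moves in C
      have hplay : (linHom A C).plays (pAC A B C u ++ [Sum.inl c]) := hpl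
      have hplC : C.plays (projL (pBC A B C u) ++ [c]) := by
        have := ((linHom_plays_def A C (pAC A B C u ++ [Sum.inl c])).mp hplay).1
        rwa [projL_append, projL_singleton_inl, projL_pAC] at this
      have e := (linHom_snoc_inl hN.Cw hN.Cn hplay).1
      rw [len_pAC] at e
      have hlabC : C.lab c = decide ((nC A B C u + nB A B C u) % 2 = 1) := by
        have h0 : C.lab c = false := e.trans (decide_eq_false (by omega))
        exact h0.trans (decide_eq_false (by omega)).symm
      have hg1 : Good A B C (u ++ [Sum.inr (Sum.inr c)]) := mkGood_C hN hg hplC hlabC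
      obtain ⟨v, m, hG, hvS, hvT, hACeq⟩ := pingpong hN hS hSt hT hTt hkB (kB + 1)
        (u ++ [Sum.inr (Sum.inr c)]) hg1
        (Or.inl ⟨by simpa using hu1', pBC A B C u, Sum.inl c, hu2', by simp⟩)
        (by omega)
      refine ⟨m, ⟨(u ++ [Sum.inr (Sum.inr c)]) ++ v, hvS, hvT, ?_⟩⟩
      show pAC A B C u ++ [Sum.inl c, m] =
        pAC A B C ((u ++ [Sum.inr (Sum.inr c)]) ++ v)
      rw [hACeq]
      simp
    · -- Opponent moves in A
      have hplay : (linHom A C).plays (pAC A B C u ++ [Sum.inr a0]) := hpl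
      have hplA : A.plays (projR (pAB A B C u) ++ [a0]) := by
        have := ((linHom_plays_def A C (pAC A B C u ++ [Sum.inr a0])).mp hplay).2.1
        rwa [projR_append, projR_singleton_inr, projR_pAC] at this
      have e := linHom_snoc_inr hN.Aw hN.An hplay
      have e1 := e.1
      rw [len_pAC] at e1
      have hA1 : A.lab a0 = true := by
        have := e1.trans (decide_eq_false (by omega))
        simpa using this
      have hnAodd : nA A B C u % 2 = 1 := by
        have h2 := e.2
        rw [projR_pAC] at h2
        exact of_decide_eq_true (h2.symm.trans hA1)
      have hlabA : (!A.lab a0) = decide ((nB A B C u + nA A B C u) % 2 = 1) := by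
        simp only [hA1, Bool.not_true]
        exact (decide_eq_false (by omega)).symm
      have hB0 : projL (pAB A B C u) ≠ [] := by
        intro h0
        have : nB A B C u = 0 := by simp [nB, h0]
        omega
      have hg1 : Good A B C (u ++ [Sum.inl a0]) := mkGood_A hN hg hplA hlabA hB0
      obtain ⟨v, m, hG, hvS, hvT, hACeq⟩ := pingpong hN hS hSt hT hTt hkB (kB + 1)
        (u ++ [Sum.inl a0]) hg1
        (Or.inr ⟨by simpa using hu2', pAB A B C u, Sum.inr a0, hu1', by simp⟩)
        (by omega)
      refine ⟨m, ⟨(u ++ [Sum.inl a0]) ++ v, hvS, hvT, ?_⟩⟩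
      show pAC A B C u ++ [Sum.inr a0, m] =
        pAC A B C ((u ++ [Sum.inl a0]) ++ v)
      rw [hACeq]
      simp

end WS
end

section
/- In a distributive decomposable sequoidal closed category, the map dist⁰_⊸ : (A ⊸ I) → I given by af = (dec⁰)⁻¹ ∘ t is an isomorphism, with inverse Λ(runit_⊗ ∘ (id ⊗ af)). -/
open CategoryTheory MonoidalCategory

universe u v

namespace WS

variable (C : Type u) [Category.{v} C] [MonoidalCategory C] [SymmetricCategory C]

/-- A (distributive, decomposable) sequoidal closed category, presented over a
symmetric monoidal category `C`: a wide subcategory `C_s` of strict morphisms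
(such that `J : C_s → C` reflects isomorphisms), a right action `⊘` of `C` on
`C_s` with unit and associativity isomorphisms, a natural transformation
`wk : J(−) ⊗ − ⇒ J(− ⊘ −)`, a monoidal closed structure `⊸` with currying
bijection `adj`, and the sequoidal-closure condition that `f ↦ Λ(f ∘ wk)` is a
bijection `C_s(B ⊘ A, X) ≅ C_s(B, A ⊸ X)`, with a chosen strict evaluation
`apps` satisfying `app = apps ∘ wk`. -/
structure SeqCat where
  strict : ∀ {X Y : C}, (X ⟶ Y) → Prop
  strict_id : ∀ X : C, strict (𝟙 X)
  strict_comp : ∀ {X Y Z : C} {f : X ⟶ Y} {g : Y ⟶ Z}, strict f → strict g → strict (f ≫ g)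
  strict_inv : ∀ {X Y : C} (f : X ⟶ Y) (g : Y ⟶ X),
    strict f → f ≫ g = 𝟙 X → g ≫ f = 𝟙 Y → strict g
  seq : C → C → C
  seqMap : ∀ {A B X Y : C} (f : A ⟶ B), strict f → (X ⟶ Y) → (seq A X ⟶ seq B Y)
  seqMap_strict : ∀ {A B X Y : C} (f : A ⟶ B) (hf : strict f) (g : X ⟶ Y),
    strict (seqMap f hf g)
  seqMap_id : ∀ A X : C, seqMap (𝟙 A) (strict_id A) (𝟙 X) = 𝟙 (seq A X)
  seqMap_comp : ∀ {A B B' X Y Y' : C} (f : A ⟶ B) (hf : strict f) (f' : B ⟶ B')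
    (hf' : strict f') (g : X ⟶ Y) (g' : Y ⟶ Y'),
    seqMap (f ≫ f') (strict_comp hf hf') (g ≫ g') = seqMap f hf g ≫ seqMap f' hf' g'
  unitSeq : ∀ A : C, seq A (𝟙_ C) ≅ A
  unitSeq_strict : ∀ A : C, strict (unitSeq A).hom
  unitSeq_strict_inv : ∀ A : C, strict (unitSeq A).inv
  pasc : ∀ A B X : C, seq A (B ⊗ X) ≅ seq (seq A B) X
  pasc_strict : ∀ A B X : C, strict (pasc A B X).hom
  pasc_strict_inv : ∀ A B X : C, strict (pasc A B X).inv
  wk : ∀ A X : C, A ⊗ X ⟶ seq A X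
  wk_strict : ∀ A X : C, strict (wk A X)
  wk_natural : ∀ {A B X Y : C} (f : A ⟶ B) (hf : strict f) (g : X ⟶ Y),
    (f ⊗ₘ g) ≫ wk B Y = wk A X ≫ seqMap f hf g
  hom : C → C → C
  homMap : ∀ {A' A X X' : C}, (A' ⟶ A) → (X ⟶ X') → (hom A X ⟶ hom A' X')
  homMap_id : ∀ A X : C, homMap (𝟙 A) (𝟙 X) = 𝟙 (hom A X)
  homMap_comp : ∀ {A'' A' A X X' X'' : C} (e : A'' ⟶ A') (e' : A' ⟶ A)
    (g : X ⟶ X') (g' : X' ⟶ X''),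
    homMap (e ≫ e') (g ≫ g') = homMap e' g ≫ homMap e g'
  adj : ∀ A B X : C, (B ⊗ A ⟶ X) ≃ (B ⟶ hom A X)
  adj_natural_left : ∀ {A B B' X : C} (g : B' ⟶ B) (f : B ⊗ A ⟶ X),
    adj A B' X ((g ⊗ₘ 𝟙 A) ≫ f) = g ≫ adj A B X f
  adj_natural : ∀ {A' A B X X' : C} (e : A' ⟶ A) (h : X ⟶ X') (f : B ⊗ A ⟶ X),
    adj A' B X' ((𝟙 B ⊗ₘ e) ≫ f ≫ h) = adj A B X f ≫ homMap e h
  seqClosed_strict : ∀ {A B X : C} (f : seq B A ⟶ X), strict f →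
    strict (adj A B X (wk B A ≫ f))
  seqClosed_bij : ∀ (A B X : C) (g : B ⟶ hom A X), strict g →
    ∃! f : seq B A ⟶ X, strict f ∧ adj A B X (wk B A ≫ f) = g
  apps : ∀ A X : C, seq (hom A X) A ⟶ X
  apps_strict : ∀ A X : C, strict (apps A X)
  apps_spec : ∀ A X : C, wk (hom A X) A ≫ apps A X = (adj A (hom A X) X).symm (𝟙 (hom A X))

variable {C}

/-- Evaluation `app : (A ⊸ X) ⊗ A ⟶ X`. -/
def SeqCat.app (S : SeqCat C) (A X : C) : S.hom A X ⊗ A ⟶ X :=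
  (S.adj A (S.hom A X) X).symm (𝟙 (S.hom A X))

/-- The canonical map `unit_⊸ : (I ⊸ X) ⟶ X`, i.e. `app ∘ runit_⊗⁻¹`. -/
def SeqCat.unitHom (S : SeqCat C) (X : C) : S.hom (𝟙_ C) X ⟶ X :=
  (ρ_ (S.hom (𝟙_ C) X)).inv ≫ S.app (𝟙_ C) X

/-- The canonical map `pasc_⊸ : ((A ⊗ B) ⊸ X) ⟶ (A ⊸ (B ⊸ X))`, i.e.
`Λ(Λ(app ∘ assoc))`. -/
def SeqCat.pascHom (S : SeqCat C) (A B X : C) :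
    S.hom (A ⊗ B) X ⟶ S.hom A (S.hom B X) :=
  S.adj A (S.hom (A ⊗ B) X) (S.hom B X)
    (S.adj B (S.hom (A ⊗ B) X ⊗ A) X
      ((α_ (S.hom (A ⊗ B) X) A B).hom ≫ S.app (A ⊗ B) X))


/-- A Cartesian, decomposable, distributive sequoidal closed category: `C_s` has
finite products preserved by `J` (so `1` is terminal in `C` and the monoidal
structure is affine via `dec⁰ : I ≅ 1`), the decomposition
`dec = ⟨wk, wk ∘ sym⟩ : A ⊗ B ⟶ (A ⊘ B) × (B ⊘ A)` and the distributivities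
`dist : (A × B) ⊘ X ⟶ (A ⊘ X) × (B ⊘ X)` and `dist₀ : 1 ⊘ X ⟶ 1` are
isomorphisms. -/
structure SeqCatProd (C : Type u) [Category.{v} C] [MonoidalCategory C]
    [SymmetricCategory C] extends SeqCat C where
  term : C
  tmap : ∀ X : C, X ⟶ term
  tmap_strict : ∀ X : C, strict (tmap X)
  tmap_uniq : ∀ {X : C} (f g : X ⟶ term), f = g
  prod : C → C → C
  fst : ∀ X Y : C, prod X Y ⟶ X
  snd : ∀ X Y : C, prod X Y ⟶ Y
  fst_strict : ∀ X Y : C, strict (fst X Y)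
  snd_strict : ∀ X Y : C, strict (snd X Y)
  lift : ∀ {Z X Y : C}, (Z ⟶ X) → (Z ⟶ Y) → (Z ⟶ prod X Y)
  lift_fst : ∀ {Z X Y : C} (f : Z ⟶ X) (g : Z ⟶ Y), lift f g ≫ fst X Y = f
  lift_snd : ∀ {Z X Y : C} (f : Z ⟶ X) (g : Z ⟶ Y), lift f g ≫ snd X Y = g
  lift_uniq : ∀ {Z X Y : C} (h h' : Z ⟶ prod X Y),
    h ≫ fst X Y = h' ≫ fst X Y → h ≫ snd X Y = h' ≫ snd X Y → h = h'
  lift_strict : ∀ {Z X Y : C} (f : Z ⟶ X) (g : Z ⟶ Y),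
    strict f → strict g → strict (lift f g)
  dec0_iso : IsIso (tmap (𝟙_ C))
  dec_iso : ∀ A B : C, IsIso (lift (wk A B) ((β_ A B).hom ≫ wk B A))
  dist_iso : ∀ A B X : C,
    IsIso (lift (seqMap (fst A B) (fst_strict A B) (𝟙 X))
                (seqMap (snd A B) (snd_strict A B) (𝟙 X)))
  dist0_iso : ∀ X : C, IsIso (tmap (seq term X))

variable {C : Type u} [Category.{v} C] [MonoidalCategory C] [SymmetricCategory C]

/-- `af : A ⟶ I`, the unique affine map `(dec⁰)⁻¹ ∘ t_A`. -/
noncomputable def SeqCatProd.af (S : SeqCatProd C) (A : C) : A ⟶ 𝟙_ C := by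
  haveI := S.dec0_iso
  exact S.tmap A ≫ inv (S.tmap (𝟙_ C))

/-- in a distributive decomposable sequoidal closed category, the
map `dist⁰_⊸ = af : (A ⊸ I) ⟶ I` is an isomorphism with inverse
`Λ(runit_⊗ ∘ (id ⊗ af))`. -/
theorem hom_into_unit_iso (S : SeqCatProd C) (A : C) :
    S.af (S.hom A (𝟙_ C)) ≫
        S.adj A (𝟙_ C) (𝟙_ C) ((𝟙 (𝟙_ C) ⊗ₘ S.af A) ≫ (ρ_ (𝟙_ C)).hom)
      = 𝟙 (S.hom A (𝟙_ C)) ∧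
    S.adj A (𝟙_ C) (𝟙_ C) ((𝟙 (𝟙_ C) ⊗ₘ S.af A) ≫ (ρ_ (𝟙_ C)).hom) ≫
        S.af (S.hom A (𝟙_ C))
      = 𝟙 (𝟙_ C) := by
  haveI := S.dec0_iso
  have unit_uniq : ∀ {X : C} (f g : X ⟶ 𝟙_ C), f = g := by
    intro X f g
    have h : f ≫ S.tmap (𝟙_ C) = g ≫ S.tmap (𝟙_ C) := S.tmap_uniq _ _
    exact (cancel_mono (S.tmap (𝟙_ C))).mp h
  have hom_uniq : ∀ {X : C} (f g : X ⟶ S.hom A (𝟙_ C)), f = g := by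
    intro X f g
    exact (S.adj A X (𝟙_ C)).symm.injective (unit_uniq _ _)
  exact ⟨hom_uniq _ _, unit_uniq _ _⟩

end WS
end

section
/- Hom-sets of the cpo-enriched category G of games and strategies are algebraic domains under strategy inclusion: every strategy is the directed supremum of its finite (compact) sub-strategies, directed suprema of strategies exist and are computed as unions, and composition of strategies is continuous with respect to these suprema. -/
namespace WS

/-- hom-sets of the category of games and strategies are algebraic
domains under inclusion: directed suprema of strategies are unions, every
strategy is the directed supremum of its finite sub-strategies, finite
strategies are compact, and composition is continuous. -/
theorem strategies_algebraic_and_composition_continuous :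
    (∀ (G : Game) (D : Set (Set (List G.Move))), D.Nonempty →
        DirectedOn (· ⊆ ·) D → (∀ S ∈ D, IsStrategy G S) → IsStrategy G (⋃₀ D)) ∧
    (∀ (G : Game) (S : Set (List G.Move)), IsStrategy G S →
        S = ⋃₀ {T | IsStrategy G T ∧ T ⊆ S ∧ T.Finite}) ∧
    (∀ (G : Game) (S : Set (List G.Move)), IsStrategy G S → S.Finite →
        ∀ D : Set (Set (List G.Move)), D.Nonempty → DirectedOn (· ⊆ ·) D →
          (∀ T ∈ D, IsStrategy G T) → S ⊆ ⋃₀ D → ∃ T ∈ D, S ⊆ T) ∧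
    (∀ (A B C : Game), A.Wellformed → B.Wellformed → C.Wellformed →
        A.Negative → B.Negative → C.Negative →
        ∀ S : Set (List (linHom A B).Move), IsStrategy (linHom A B) S →
          ∀ D : Set (Set (List (linHom B C).Move)), D.Nonempty →
            DirectedOn (· ⊆ ·) D → (∀ T ∈ D, IsStrategy (linHom B C) T) →
            composeSet A B C S (⋃₀ D) = ⋃ T ∈ D, composeSet A B C S T) ∧
    (∀ (A B C : Game), A.Wellformed → B.Wellformed → C.Wellformed →
        A.Negative → B.Negative → C.Negative →
        ∀ T : Set (List (linHom B C).Move), IsStrategy (linHom B C) T →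
          ∀ D : Set (Set (List (linHom A B).Move)), D.Nonempty →
            DirectedOn (· ⊆ ·) D → (∀ S ∈ D, IsStrategy (linHom A B) S) →
            composeSet A B C (⋃₀ D) T = ⋃ S ∈ D, composeSet A B C S T) := by
  refine ⟨?_, ?_, ?_, ?_, ?_⟩
  · -- directed unions of strategies are strategies
    intro G D hne hdir hstr
    refine ⟨?_, ?_, ?_, ?_, ?_, ?_⟩
    · rintro s ⟨S, hS, hs⟩
      exact (hstr S hS).1 s hs
    · rintro s a ⟨S, hS, hs⟩
      exact (hstr S hS).2.1 s a hs
    · rintro s a b ⟨S, hS, hs⟩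
      exact ⟨S, hS, (hstr S hS).2.2.1 s a b hs⟩
    · rintro s a b ⟨S1, hS1, h1⟩ ⟨S2, hS2, h2⟩
      obtain ⟨S3, hS3, h13, h23⟩ := hdir S1 hS1 S2 hS2
      exact (hstr S3 hS3).2.2.2.1 s a b (h13 h1) (h23 h2)
    · intro h
      obtain ⟨S, hS⟩ := hne
      have hSe : S = ∅ := by
        apply Set.eq_empty_iff_forall_notMem.2
        intro x hx
        exact Set.eq_empty_iff_forall_notMem.1 h x ⟨S, hS, hx⟩
      exact (hstr S hS).2.2.2.2.1 hSe
    · rintro ⟨S, hS, h⟩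
      exact (hstr S hS).2.2.2.2.2 h
  · -- every strategy is the union of its finite sub-strategies
    intro G S hS
    obtain ⟨hpl, hP, hpre, hdet, _, hns⟩ := hS
    apply Set.Subset.antisymm
    · intro s hs
      refine Set.mem_sUnion.2
        ⟨{t | t ∈ S ∧ t <+: s}, ⟨⟨?_, ?_, ?_, ?_, ?_, ?_⟩, ?_, ?_⟩, hs, List.prefix_refl s⟩
      · exact fun t ht => hpl t ht.1
      · exact fun t a ht => hP t a ht.1
      · rintro t a b ⟨h1, h2⟩
        exact ⟨hpre t a b h1, (t.prefix_append [a, b]).trans h2⟩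
      · rintro t a b ⟨h1, _⟩ ⟨h2, _⟩
        exact hdet t a b h1 h2
      · intro h
        exact (Set.eq_empty_iff_forall_notMem.1 h s ⟨hs, List.prefix_refl s⟩).elim
      · rintro ⟨h, _⟩
        exact hns h
      · exact fun t ht => ht.1
      · exact Set.Finite.subset (List.finite_toSet s.inits)
          (fun t ht => (List.mem_inits t s).2 ht.2)
    · exact Set.sUnion_subset fun T hT => hT.2.1
  · -- finite strategies are compact
    intro G S _ hfin D hne hdir _ hsub
    have key : ∀ S' : Set (List G.Move), S'.Finite → S' ⊆ ⋃₀ D → ∃ T ∈ D, S' ⊆ T := by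
      intro S' hfin'
      refine Set.Finite.induction_on (motive := fun X _ => X ⊆ ⋃₀ D → ∃ T ∈ D, X ⊆ T)
        S' hfin' ?_ ?_
      · intro _
        obtain ⟨T, hT⟩ := hne
        exact ⟨T, hT, by simp⟩
      · intro a s ha hs ih hsub'
        obtain ⟨T1, hT1, h1⟩ := ih (fun x hx => hsub' (Set.mem_insert_of_mem _ hx))
        obtain ⟨T2, hT2, h2⟩ := hsub' (Set.mem_insert a s)
        obtain ⟨T3, hT3, h13, h23⟩ := hdir T1 hT1 T2 hT2
        refine ⟨T3, hT3, fun x hx => ?_⟩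
        rcases hx with rfl | hx
        · exact h23 h2
        · exact h13 (h1 hx)
    exact key S hfin hsub
  · -- continuity in the second argument
    intro A B C _ _ _ _ _ _ S _ D _ _ _
    ext t
    simp only [Set.mem_iUnion, composeSet, Set.mem_setOf_eq, Set.mem_sUnion]
    constructor
    · rintro ⟨u, h1, ⟨T, hT, h2⟩, h3⟩
      exact ⟨T, hT, u, h1, h2, h3⟩
    · rintro ⟨T, hT, u, h1, h2, h3⟩
      exact ⟨u, h1, ⟨T, hT, h2⟩, h3⟩
  · -- continuity in the first argument
    intro A B C _ _ _ _ _ _ T _ D _ _ _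
    ext t
    simp only [Set.mem_iUnion, composeSet, Set.mem_setOf_eq, Set.mem_sUnion]
    constructor
    · rintro ⟨u, ⟨S, hS, h1⟩, h2, h3⟩
      exact ⟨S, hS, u, h1, h2, h3⟩
    · rintro ⟨S, hS, u, h1, h2, h3⟩
      exact ⟨u, ⟨S, hS, h1⟩, h2, h3⟩


end WS
end
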